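/- For every integer n ≥ 1 and every x, q_n(x) = Σ_{k=0}^{n} (−2)^{n−k} · k! · (Σ_{i=k}^{n} C(n,i) · 2^i · S(i,k)) · (x+1)^k, where C(n,i) denotes the binomial coefficient and S(i,k) is the Stirling number of the second kind (so that k!·S(i,k) equals the number of surjective functions from an i-element set onto a k-element set). -/

import Mathlib

open Polynomial Finset

/-- The alternating derivative polynomials for tangent: `p 0 = X`,
`p (n+1) = (X^2 - 1) * (p n)'`. -/
noncomputable def p : ℕ → Polynomial ℝ
  | 0 => X
  | n + 1 => (X ^ 2 - 1) * derivative (p n)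

/-- The alternating derivative polynomials for secant: `q 0 = 1`,
`q (n+1) = 2(X^2 - 1) * (q n)' + 2X * q n`. -/
noncomputable def q : ℕ → Polynomial ℝ
  | 0 => 1
  | n + 1 => 2 * (X ^ 2 - 1) * derivative (q n) + 2 * X * q n

/-- The Stirling number of the second kind `S(n,k)`, defined so that
`k! * S(n,k)` is the number of surjections from `Fin n` onto `Fin k`. -/
noncomputable def stirling2 (n k : ℕ) : ℝ :=
  (Fintype.card {f : Fin n → Fin k // Function.Surjective f} : ℝ) / (k.factorial : ℝ)

noncomputable def surj (i k : ℕ) : ℕ :=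
  Fintype.card {f : Fin i → Fin k // Function.Surjective f}

lemma surj_lt {i k : ℕ} (h : i < k) : surj i k = 0 := by
  rw [surj, Fintype.card_eq_zero_iff]
  refine ⟨fun ⟨f, hf⟩ => ?_⟩
  have := Fintype.card_le_of_surjective f hf
  simp only [Fintype.card_fin] at this
  omega

lemma surj_eq (i k : ℕ) : (surj i k : ℝ) =
    ∑ j ∈ range (k + 1), (-1 : ℝ) ^ j * (k.choose j) * ((k - j : ℕ) : ℝ) ^ i := by
  classical
  set S : Fin k → Finset (Fin i → Fin k) :=
    fun a => univ.filter fun f => ∀ x, f x ≠ a with hS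
  have h1 : (univ : Finset (Fin k)).inf (fun a => (S a)ᶜ)
      = univ.filter (fun f => Function.Surjective f) := by
    ext f
    simp [S, Finset.mem_inf, Function.Surjective, eq_comm]
  have h2 : ∀ t : Finset (Fin k), #(t.inf S) = (k - #t) ^ i := by
    intro t
    have ht : t.inf S = Fintype.piFinset (fun _ : Fin i => tᶜ) := by
      ext f
      simp only [Fintype.mem_piFinset, Finset.mem_inf, S, mem_filter, mem_univ, true_and,
        Finset.mem_compl]
      constructor
      · intro h x hx; exact h _ hx x rfl
      · intro h a ha x hfx; exact h x (hfx ▸ ha)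
    rw [ht, Fintype.card_piFinset]
    simp [Finset.card_compl]
  have key : (surj i k : ℤ) =
      ∑ j ∈ range (k + 1), (k.choose j : ℤ) • ((-1 : ℤ) ^ j * ((k - j) ^ i : ℕ)) := by
    rw [surj, Fintype.card_subtype, ← h1, Finset.inclusion_exclusion_card_inf_compl,
      Finset.sum_powerset]
    rw [Finset.card_univ, Fintype.card_fin]
    refine Finset.sum_congr rfl fun j hj => ?_
    have : ∀ t ∈ powersetCard j (univ : Finset (Fin k)),
        (-1 : ℤ) ^ #t * #(t.inf S) = (fun m => (-1 : ℤ) ^ m * ((k - m) ^ i : ℕ)) #t := by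
      intro t ht; simp [h2 t]
    rw [Finset.sum_congr rfl this]
    refine (Finset.sum_powersetCard j univ (fun m => (-1 : ℤ) ^ m * ((k - m) ^ i : ℕ))).trans ?_
    simp [mul_comm]
  have := congrArg (fun z : ℤ => (z : ℝ)) key
  push_cast [zsmul_eq_mul] at this
  rw [this]
  refine Finset.sum_congr rfl fun j hj => ?_
  push_cast
  ring

noncomputable def bb (n k : ℕ) : ℝ :=
  ∑ j ∈ range (k + 1), (-1 : ℝ) ^ j * (k.choose j) * (2 * j + 1) ^ n

lemma surj_eq' (i k : ℕ) : (surj i k : ℝ) =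
    (-1 : ℝ) ^ k * ∑ j ∈ range (k + 1), (-1 : ℝ) ^ j * (k.choose j) * (j : ℝ) ^ i := by
  rw [surj_eq, Finset.mul_sum, ← Finset.sum_range_reflect]
  refine Finset.sum_congr rfl fun j hj => ?_
  rw [Finset.mem_range] at hj
  have hj' : j ≤ k := by omega
  rw [show k + 1 - 1 - j = k - j from by omega]
  rw [Nat.choose_symm hj', show k - (k - j) = j from by omega]
  have hsign : (-1 : ℝ) ^ (k - j) = (-1) ^ k * (-1) ^ j := by
    have h1 : (-1 : ℝ) ^ (k - j) * (-1) ^ j = (-1) ^ k := by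
      rw [← pow_add, Nat.sub_add_cancel hj']
    have h2 : ((-1 : ℝ) ^ j) * ((-1) ^ j) = 1 := by
      rw [← pow_add]; exact Even.neg_one_pow ⟨j, rfl⟩
    calc (-1 : ℝ) ^ (k - j) = (-1 : ℝ) ^ (k - j) * ((-1) ^ j * (-1) ^ j) := by rw [h2, mul_one]
    _ = (-1) ^ k * (-1) ^ j := by rw [← mul_assoc, h1]
  rw [hsign]; ring

lemma key_B (n k : ℕ) :
    ∑ i ∈ Finset.Icc k n, (n.choose i : ℝ) * 2 ^ i * (surj i k : ℝ) = (-1 : ℝ) ^ k * bb n k := by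
  have hext : ∑ i ∈ Finset.Icc k n, (n.choose i : ℝ) * 2 ^ i * (surj i k : ℝ)
      = ∑ i ∈ range (n + 1), (n.choose i : ℝ) * 2 ^ i * (surj i k : ℝ) := by
    refine Finset.sum_subset ?_ ?_
    · intro i hi; rw [Finset.mem_Icc] at hi; rw [Finset.mem_range]; omega
    · intro i hi hni
      rw [Finset.mem_range] at hi; rw [Finset.mem_Icc] at hni
      have : i < k := by omega
      rw [surj_lt this]; simp
  rw [hext]
  simp only [surj_eq', Finset.mul_sum]
  rw [Finset.sum_comm]
  rw [bb, Finset.mul_sum]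
  refine Finset.sum_congr rfl fun j hj => ?_
  have hb : ((2:ℝ) * j + 1) ^ n = ∑ i ∈ range (n + 1), (2 * (j:ℝ)) ^ i * 1 ^ (n - i) * (n.choose i) :=
    add_pow _ _ _
  rw [hb]
  simp only [Finset.mul_sum]
  refine Finset.sum_congr rfl fun i hi => ?_
  rw [mul_pow, one_pow]
  ring

lemma bb_zero {n k : ℕ} (h : n < k) : bb n k = 0 := by
  have := key_B n k
  rw [Finset.Icc_eq_empty (by omega), Finset.sum_empty] at this
  have hk : ((-1 : ℝ) ^ k) ≠ 0 := by positivity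
  field_simp at this
  exact (mul_eq_zero.mp this.symm).resolve_left hk

lemma nat_id (k j : ℕ) : (k - j) * k.choose j = k * (k - 1).choose j := by
  rcases Nat.eq_zero_or_pos k with rfl | hk
  · simp
  rcases le_or_gt k j with h | h
  · rw [Nat.sub_eq_zero_of_le h, zero_mul]
    rcases eq_or_lt_of_le h with rfl | h'
    · rw [Nat.choose_eq_zero_of_lt (by omega), mul_zero]
    · rw [Nat.choose_eq_zero_of_lt (by omega), mul_zero]
  · obtain ⟨s, rfl⟩ : ∃ s, k = s + 1 := ⟨k - 1, by omega⟩
    have h1 := Nat.add_one_mul_choose_eq s j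
    have h2 := Nat.choose_succ_right_eq (s + 1) j
    simp only [Nat.succ_eq_add_one, Nat.add_sub_cancel] at h1 h2 ⊢
    rw [mul_comm, ← h2]
    exact h1.symm

lemma bb_rec (n k : ℕ) : bb (n + 1) k = (2 * k + 1) * bb n k - 2 * k * bb n (k - 1) := by
  have step1 : bb (n + 1) k = (2 * k + 1) * bb n k
      - 2 * k * ∑ j ∈ range (k + 1), (-1 : ℝ) ^ j * ((k-1).choose j) * (2 * j + 1) ^ n := by
    rw [bb, bb, Finset.mul_sum, Finset.mul_sum, ← Finset.sum_sub_distrib]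
    refine Finset.sum_congr rfl fun j hj => ?_
    rw [Finset.mem_range] at hj
    have hid : ((k - j : ℕ) : ℝ) * (k.choose j : ℝ) = (k : ℝ) * ((k-1).choose j : ℝ) := by
      exact_mod_cast congrArg (fun m : ℕ => (m : ℝ)) (nat_id k j)
    have hkj : ((k - j : ℕ) : ℝ) = (k : ℝ) - j := by
      have : j ≤ k := by omega
      push_cast [this]; ring
    linear_combination (2 * ((-1:ℝ)^j * (2*(j:ℝ)+1)^n) * (k.choose j : ℝ)) * hkj
      - (2 * ((-1:ℝ)^j * (2*(j:ℝ)+1)^n)) * hid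
  rw [step1]
  congr 1
  rcases Nat.eq_zero_or_pos k with rfl | hk
  · norm_num
  · obtain ⟨s, rfl⟩ : ∃ s, k = s + 1 := ⟨k - 1, by omega⟩
    congr 1
    rw [Finset.sum_range_succ]
    simp only [Nat.succ_eq_add_one, Nat.add_sub_cancel]
    rw [Nat.choose_eq_zero_of_lt (by omega)]
    rw [bb]
    push_cast
    ring

noncomputable def cc (n k : ℕ) : ℝ := (-2) ^ (n - k) * (-1) ^ k * bb n k

lemma bb_base (n : ℕ) : bb n 0 = 1 := by simp [bb]

lemma cc_rec (n k : ℕ) (hk : k ≤ n + 1) :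
    cc (n + 1) k = 2 * k * cc n (k - 1) - (4 * k + 2) * cc n k := by
  rcases Nat.eq_zero_or_pos k with rfl | hkpos
  · simp only [cc, Nat.sub_zero, pow_zero, mul_one, Nat.cast_zero, bb_base, pow_succ]
    ring
  obtain ⟨s, rfl⟩ : ∃ s, k = s + 1 := ⟨k - 1, by omega⟩
  simp only [cc, Nat.succ_eq_add_one, Nat.add_sub_cancel]
  rw [bb_rec n (s + 1)]
  simp only [Nat.add_sub_cancel]
  rcases eq_or_lt_of_le hk with heq | hlt
  · -- k = n + 1, i.e. s = n
    have hs : s = n := by omega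
    subst hs
    rw [bb_zero (by omega : s < s + 1)]
    simp only [Nat.sub_self, pow_zero, Nat.add_sub_cancel]
    push_cast
    ring
  · -- s + 1 ≤ n
    have hsn : s + 1 ≤ n := by omega
    rw [show n + 1 - (s + 1) = (n - (s + 1)) + 1 from by omega,
        show n - s = (n - (s + 1)) + 1 from by omega]
    push_cast
    ring

lemma cc_zero {n k : ℕ} (h : n < k) : cc n k = 0 := by simp [cc, bb_zero h]

lemma q_eq (n : ℕ) : q n = ∑ k ∈ range (n + 1), C (cc n k) * (X + 1) ^ k := by
  induction n with
  | zero => simp [q, cc, bb]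
  | succ n ih =>
    have hR : ∑ k ∈ range (n + 2), C (cc (n + 1) k) * (X + 1) ^ k
        = ∑ k ∈ range (n + 1),
          (C (2 * ((k : ℝ) + 1) * cc n k) * (X + 1) ^ (k + 1)
            - C ((4 * (k : ℝ) + 2) * cc n k) * (X + 1) ^ k) := by
      have h1 : ∀ k ∈ range (n + 2), C (cc (n + 1) k) * (X + 1) ^ k
          = C (2 * (k : ℝ) * cc n (k - 1)) * (X + 1) ^ k
            - C ((4 * (k : ℝ) + 2) * cc n k) * (X + 1) ^ k := by
        intro k hk
        rw [Finset.mem_range] at hk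
        rw [cc_rec n k (by omega), map_sub, sub_mul]
      rw [Finset.sum_congr rfl h1, Finset.sum_sub_distrib]
      rw [Finset.sum_range_succ'
        (fun k => C (2 * (k : ℝ) * cc n (k - 1)) * (X + 1) ^ k) (n + 1)]
      rw [Finset.sum_range_succ
        (fun k => C ((4 * (k : ℝ) + 2) * cc n k) * (X + 1) ^ k) (n + 1)]
      rw [cc_zero (by omega : n < n + 1)]
      simp only [Nat.cast_zero, mul_zero, zero_mul, map_zero, pow_zero, mul_one, add_zero,
        Nat.add_sub_cancel, Nat.cast_add, Nat.cast_one, mul_zero]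
      exact (Finset.sum_sub_distrib _ _).symm
    rw [q, ih, hR, derivative_sum]
    simp only [derivative_mul, derivative_C, zero_mul, zero_add, derivative_pow,
      derivative_add, derivative_X, derivative_one, add_zero, mul_one]
    rw [Finset.mul_sum, Finset.mul_sum, ← Finset.sum_add_distrib]
    refine Finset.sum_congr rfl fun k hk => ?_
    cases k with
    | zero =>
      simp only [Nat.cast_zero, map_zero, zero_mul, mul_zero, pow_zero, mul_one,
        Nat.zero_sub, pow_zero, zero_add, Nat.cast_one]
      simp only [map_mul, map_add, map_ofNat, map_one]
      ring
    | succ m =>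
      simp only [Nat.cast_add, Nat.cast_one, Nat.add_sub_cancel]
      simp only [map_mul, map_add, map_ofNat, map_one, map_natCast]
      push_cast
      ring

lemma cc_eq (n k : ℕ) :
    (-2 : ℝ) ^ (n - k) * (k.factorial : ℝ)
      * (∑ i ∈ Finset.Icc k n, (n.choose i : ℝ) * 2 ^ i * stirling2 i k) = cc n k := by
  have hfac : (k.factorial : ℝ) ≠ 0 := by positivity
  have hmain : (k.factorial : ℝ) * ∑ i ∈ Finset.Icc k n, (n.choose i : ℝ) * 2 ^ i * stirling2 i k
      = ∑ i ∈ Finset.Icc k n, (n.choose i : ℝ) * 2 ^ i * (surj i k : ℝ) := by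
    rw [Finset.mul_sum]
    refine Finset.sum_congr rfl fun i hi => ?_
    unfold stirling2 surj
    field_simp
  rw [mul_assoc, hmain, key_B, cc, mul_assoc]

theorem q_eq_sum_stirling (n : ℕ) (hn : 1 ≤ n) (x : ℝ) :
    (q n).eval x =
      ∑ k ∈ Finset.range (n + 1),
        (-2 : ℝ) ^ (n - k) * (k.factorial : ℝ) *
          (∑ i ∈ Finset.Icc k n, (n.choose i : ℝ) * 2 ^ i * stirling2 i k) * (x + 1) ^ k := by
  rw [q_eq n]
  simp only [eval_finset_sum, eval_mul, eval_pow, eval_add, eval_X, eval_one, eval_C]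
  refine Finset.sum_congr rfl fun k hk => ?_
  rw [← cc_eq n k]
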